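/- Fix 0 < α < 1 and for each n let a_n be chosen so that P(W_n^{++} ≥ a_n) ≤ α, where W_n^{++} = W_n^{++}(3). Then there is a sequence δ_n → 0 such that for every n and every one-sided Gaussian mixture with fraction ε_n whose mixing distribution H satisfies P(H > 0) = 1, if X_1, …, X_n are i.i.d. from this mixture, the grid estimator satisfies P(ε̂*_{a_n} ≤ ε_n) ≥ (1 − α)(1 − δ_n). -/

import Mathlib

open MeasureTheory ProbabilityTheory Filter
open scoped Classical

noncomputable section

/-- The standard normal density. -/
def stdPdf (x : ℝ) : ℝ := (Real.sqrt (2 * Real.pi))⁻¹ * Real.exp (-(x ^ 2) / 2)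

/-- The standard normal cumulative distribution function. -/
def Phi (t : ℝ) : ℝ := ∫ x in Set.Iic t, stdPdf x

/-- `D(μ; τ, τ')`. -/
def Dfun (μ τ τ' : ℝ) : ℝ := (Phi τ - Phi (τ - μ)) / (Phi τ' - Phi (τ' - μ))

/-- Empirical cdf of a sample of size `n`. -/
def empCdf (n : ℕ) (X : Fin n → ℝ) (t : ℝ) : ℝ :=
  (n : ℝ)⁻¹ * ∑ i, if X i ≤ t then (1 : ℝ) else 0

/-- Upper envelope `F⁺ₐ`. -/
def envP (n : ℕ) (a : ℝ) (G : ℝ → ℝ) (t : ℝ) : ℝ :=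
  (2 * G t + a ^ 2 / n + (a / Real.sqrt n) * Real.sqrt (a ^ 2 / n + 4 * G t - 4 * (G t) ^ 2)) /
    (2 * (1 + a ^ 2 / n))

/-- Lower envelope `F⁻ₐ`. -/
def envM (n : ℕ) (a : ℝ) (G : ℝ → ℝ) (t : ℝ) : ℝ :=
  (2 * G t + a ^ 2 / n - (a / Real.sqrt n) * Real.sqrt (a ^ 2 / n + 4 * G t - 4 * (G t) ^ 2)) /
    (2 * (1 + a ^ 2 / n))

/-- Grid points `t_j = (j - 1)/√(2 log n)`. -/
def gridPt (n : ℕ) (j : ℕ) : ℝ := ((j : ℝ) - 1) / Real.sqrt (2 * Real.log n)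

/-- Right-hand side ratio used in the defining equation for `μ̂⁽ʲ⁾`. -/
def ratioJ (n : ℕ) (a : ℝ) (X : Fin n → ℝ) (j : ℕ) : ℝ :=
  (Phi (gridPt n j) - envP n a (empCdf n X) (gridPt n j)) /
    (Phi (gridPt n (j + 1)) - envM n a (empCdf n X) (gridPt n (j + 1)))

/-- `μ̂⁽ʲ⁾`: the solution of `D(μ; t_j, t_{j+1}) = ratio`, when it exists (else 0). -/
def muHatJ (n : ℕ) (a : ℝ) (X : Fin n → ℝ) (j : ℕ) : ℝ :=
  if h : ∃ μ > 0, Dfun μ (gridPt n j) (gridPt n (j + 1)) = ratioJ n a X j then h.choose else 0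

/-- `ε̂⁽ʲ⁾ₐ`. -/
def epsHatJ (n : ℕ) (a : ℝ) (X : Fin n → ℝ) (j : ℕ) : ℝ :=
  if ∃ μ > 0, Dfun μ (gridPt n j) (gridPt n (j + 1)) = ratioJ n a X j then
    (Phi (gridPt n j) - envP n a (empCdf n X) (gridPt n j)) /
      (Phi (gridPt n j) - Phi (gridPt n j - muHatJ n a X j))
  else 0

/-- The grid estimator `ε̂*ₐ = max_j ε̂⁽ʲ⁾ₐ`. -/
def epsHatStar (n : ℕ) (a : ℝ) (X : Fin n → ℝ) : ℝ :=
  sSup ((fun j => epsHatJ n a X j) '' (Set.Icc 1 (Nat.ceil (2 * Real.log n))))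

/-- The statistic `W_n⁺`, as a function of a uniform sample. -/
def WnPlus (n : ℕ) (U : Fin n → ℝ) : ℝ :=
  sSup ((fun t => Real.sqrt n * |empCdf n U t - t| / Real.sqrt (t * (1 - t))) ''
    (Set.Icc (1 / 2) (Phi (Real.sqrt (2 * Real.log n)))))

/-- The statistic `Y_n`, as a function of the sample, for underlying cdf `F`. -/
def Yn (n : ℕ) (F : ℝ → ℝ) (X : Fin n → ℝ) : ℝ :=
  sSup ((fun t => Real.sqrt n * |empCdf n X t - F t| / Real.sqrt (F t * (1 - F t))) ''
    (Set.Icc 0 (Real.sqrt (2 * Real.log n))))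

/-- The statistic `W_n⁺⁺(c₀)`, as a function of the sample, for underlying cdf `F`. -/
def WnPP (c0 : ℝ) (n : ℕ) (F : ℝ → ℝ) (X : Fin n → ℝ) : ℝ :=
  sSup ((fun x => Real.sqrt n * |empCdf n X x - F x| / Real.sqrt (F x * (1 - F x))) ''
    {x : ℝ | empCdf n X 0 - Real.sqrt (c0 * Real.log n / n) ≤ F x ∧
      F x ≤ Phi (Real.sqrt (2 * Real.log n))})

/-- cdf of the two-point Gaussian mixture `(1-ε)N(0,1) + εN(μ,1)`. -/
def twoPointCdf (ε μ : ℝ) (t : ℝ) : ℝ := (1 - ε) * Phi t + ε * Phi (t - μ)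

/-- cdf of the one-sided Gaussian mixture `(1-ε)N(0,1) + ε ∫ N(μ,1) dH(μ)`. -/
def oneSidedCdf (ε : ℝ) (H : Measure ℝ) (t : ℝ) : ℝ :=
  (1 - ε) * Phi t + ε * ∫ m, Phi (t - m) ∂H

/-- cdf of the Uniform(0,1) distribution. -/
def unifCdf (t : ℝ) : ℝ := max 0 (min t 1)

/-- `X₁, …, Xₙ` are i.i.d. with cdf `F` under `P`. -/
def IIDWithCdf {Ω : Type} [MeasurableSpace Ω] (P : Measure Ω) {n : ℕ}
    (X : Fin n → Ω → ℝ) (F : ℝ → ℝ) : Prop :=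
  (∀ i, Measurable (X i)) ∧ iIndepFun X P ∧
    ∀ i t, P {ω | X i ω ≤ t} = ENNReal.ofReal (F t)

/-- The event that `F` lies inside the envelope on `[0, √(2 log n)]`. -/
def EnvEvent (n : ℕ) (a : ℝ) (F : ℝ → ℝ) (X : Fin n → ℝ) : Prop :=
  ∀ t ∈ Set.Icc (0 : ℝ) (Real.sqrt (2 * Real.log n)),
    envM n a (empCdf n X) t ≤ F t ∧ F t ≤ envP n a (empCdf n X) t

/-- The detection boundary `ρ*(β)`. -/
def rhoStar (β : ℝ) : ℝ :=
  if β ≤ 3 / 4 then β - 1 / 2 else (1 - Real.sqrt (1 - β)) ^ 2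


open scoped ENNReal

section PhiBlock
section PhiBlock


lemma stdPdf_pos (x : ℝ) : 0 < stdPdf x := by
  unfold stdPdf
  positivity

lemma stdPdf_cont : Continuous stdPdf := by
  unfold stdPdf
  continuity

lemma stdPdf_eq (x : ℝ) : stdPdf x = (Real.sqrt (2 * Real.pi))⁻¹ * Real.exp (-(2⁻¹) * x ^ 2) := by
  unfold stdPdf; ring_nf

lemma integrable_stdPdf : Integrable stdPdf := by
  have h : Integrable (fun x : ℝ => Real.exp (-(2⁻¹) * x ^ 2)) := integrable_exp_neg_mul_sq (by norm_num)
  have := h.const_mul (Real.sqrt (2 * Real.pi))⁻¹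
  refine this.congr ?_
  filter_upwards with x
  rw [stdPdf_eq]

lemma integral_stdPdf : ∫ x, stdPdf x = 1 := by
  have h : ∫ x : ℝ, Real.exp (-(2⁻¹) * x ^ 2) = Real.sqrt (Real.pi / 2⁻¹) := integral_gaussian 2⁻¹
  have h2 : ∫ x, stdPdf x = (Real.sqrt (2 * Real.pi))⁻¹ * ∫ x : ℝ, Real.exp (-(2⁻¹) * x ^ 2) := by
    rw [← integral_const_mul]
    congr 1; ext x; rw [stdPdf_eq]
  rw [h2, h]
  rw [show Real.pi / 2⁻¹ = 2 * Real.pi by ring]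
  rw [inv_mul_cancel₀]
  positivity

lemma Phi_sub_Phi (s t : ℝ) : Phi t - Phi s = ∫ x in s..t, stdPdf x :=
  intervalIntegral.integral_Iic_sub_Iic integrable_stdPdf.integrableOn integrable_stdPdf.integrableOn

lemma Phi_nonneg (t : ℝ) : 0 ≤ Phi t :=
  setIntegral_nonneg measurableSet_Iic (fun x _ => (stdPdf_pos x).le)

lemma Phi_le_one (t : ℝ) : Phi t ≤ 1 := by
  rw [← integral_stdPdf]
  exact setIntegral_le_integral integrable_stdPdf (Filter.Eventually.of_forall fun x => (stdPdf_pos x).le)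

lemma Phi_strictMono : StrictMono Phi := by
  intro s t hst
  have h : 0 < Phi t - Phi s := by
    rw [Phi_sub_Phi]
    exact intervalIntegral.intervalIntegral_pos_of_pos_on
      (stdPdf_cont.intervalIntegrable _ _) (fun x _ => stdPdf_pos x) hst
  linarith

lemma Phi_mono : Monotone Phi := Phi_strictMono.monotone

lemma Phi_lt_one (t : ℝ) : Phi t < 1 :=
  lt_of_lt_of_le (Phi_strictMono (lt_add_one t)) (Phi_le_one _)

lemma Phi_pos (t : ℝ) : 0 < Phi t :=
  lt_of_le_of_lt (Phi_nonneg (t - 1)) (Phi_strictMono (by linarith))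

lemma Phi_continuous : Continuous Phi := by
  rw [Metric.continuous_iff]
  intro t ε hε
  refine ⟨ε * Real.sqrt (2 * Real.pi), by positivity, fun s hs => ?_⟩
  have hb : ∀ x, ‖stdPdf x‖ ≤ (Real.sqrt (2 * Real.pi))⁻¹ := by
    intro x
    rw [Real.norm_eq_abs, abs_of_pos (stdPdf_pos x)]
    unfold stdPdf
    have : Real.exp (-(x ^ 2) / 2) ≤ 1 := by
      rw [Real.exp_le_one_iff]; nlinarith [sq_nonneg x]
    nlinarith [Real.sqrt_pos.2 (by positivity : (0:ℝ) < 2 * Real.pi), this,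
      inv_pos.2 (Real.sqrt_pos.2 (by positivity : (0:ℝ) < 2 * Real.pi))]
  have key : dist (Phi s) (Phi t) ≤ (Real.sqrt (2 * Real.pi))⁻¹ * dist s t := by
    rw [Real.dist_eq, show Phi s - Phi t = ∫ x in t..s, stdPdf x from (Phi_sub_Phi t s)]
    have := intervalIntegral.norm_integral_le_of_norm_le_const (C := (Real.sqrt (2 * Real.pi))⁻¹)
      (f := stdPdf) (a := t) (b := s) (fun x _ => hb x)
    rw [Real.norm_eq_abs] at this
    calc |∫ x in t..s, stdPdf x| ≤ (Real.sqrt (2*Real.pi))⁻¹ * |s - t| := this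
    _ = (Real.sqrt (2*Real.pi))⁻¹ * dist s t := by rw [Real.dist_eq]
  calc dist (Phi s) (Phi t) ≤ (Real.sqrt (2 * Real.pi))⁻¹ * dist s t := key
    _ < (Real.sqrt (2 * Real.pi))⁻¹ * (ε * Real.sqrt (2 * Real.pi)) := by
        have h2π : 0 < Real.sqrt (2 * Real.pi) := Real.sqrt_pos.2 (by positivity)
        have : 0 < dist (Phi s) (Phi t) + 1 := by positivity
        apply mul_lt_mul_of_pos_left hs (inv_pos.2 h2π)
    _ = ε := by
        field_simp

lemma tendsto_Phi_atBot : Tendsto Phi atBot (nhds 0) := by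
  have hbound : ∀ t : ℝ, Phi t ≤ (Real.sqrt (2 * Real.pi))⁻¹ * Real.exp (2⁻¹) * Real.exp t := by
    intro t
    have hptw : ∀ x ∈ Set.Iic t, stdPdf x ≤ (Real.sqrt (2 * Real.pi))⁻¹ * Real.exp (2⁻¹) * Real.exp x := by
      intro x _
      unfold stdPdf
      rw [mul_assoc, ← Real.exp_add]
      have : -(x ^ 2) / 2 ≤ 2⁻¹ + x := by nlinarith [sq_nonneg (x + 1)]
      have h2 := Real.exp_le_exp.2 this
      have hpos : (0:ℝ) < (Real.sqrt (2 * Real.pi))⁻¹ := by positivity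
      nlinarith
    have hint : IntegrableOn (fun x => (Real.sqrt (2 * Real.pi))⁻¹ * Real.exp (2⁻¹) * Real.exp x) (Set.Iic t) := by
      exact (integrableOn_exp_Iic t).const_mul _
    calc Phi t ≤ ∫ x in Set.Iic t, (Real.sqrt (2 * Real.pi))⁻¹ * Real.exp (2⁻¹) * Real.exp x := by
          apply setIntegral_mono_on integrable_stdPdf.integrableOn hint measurableSet_Iic hptw
      _ = (Real.sqrt (2 * Real.pi))⁻¹ * Real.exp (2⁻¹) * Real.exp t := by
          rw [integral_const_mul, integral_exp_Iic]
  have h0 : Tendsto (fun t : ℝ => (Real.sqrt (2 * Real.pi))⁻¹ * Real.exp (2⁻¹) * Real.exp t) atBot (nhds 0) := by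
    have := Real.tendsto_exp_atBot.const_mul ((Real.sqrt (2 * Real.pi))⁻¹ * Real.exp (2⁻¹))
    simpa using this
  have hz : Tendsto (fun _ : ℝ => (0:ℝ)) atBot (nhds 0) := tendsto_const_nhds
  exact tendsto_of_tendsto_of_tendsto_of_le_of_le hz h0
    (fun t => Phi_nonneg t) (fun t => hbound t)
end PhiBlock

/-- `W τ μ = Φ(τ) - Φ(τ-μ)`. -/
def Wf (τ μ : ℝ) : ℝ := Phi τ - Phi (τ - μ)

lemma Wf_eq_integral (τ μ : ℝ) : Wf τ μ = ∫ x in (0:ℝ)..μ, stdPdf (τ - x) := by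
  rw [intervalIntegral.integral_comp_sub_left stdPdf τ]
  unfold Wf
  rw [← Phi_sub_Phi]
  simp

lemma cont_aux (τ : ℝ) : Continuous (fun x : ℝ => stdPdf (τ - x)) :=
  stdPdf_cont.comp (continuous_const.sub continuous_id)

lemma Wf_sub (τ μ m : ℝ) : Wf τ m - Wf τ μ = ∫ x in μ..m, stdPdf (τ - x) := by
  rw [Wf_eq_integral, Wf_eq_integral]
  exact intervalIntegral.integral_interval_sub_left
    ((cont_aux τ).intervalIntegrable _ _) ((cont_aux τ).intervalIntegrable _ _)

lemma Wf_pos {τ μ : ℝ} (hμ : 0 < μ) : 0 < Wf τ μ := by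
  unfold Wf
  have := Phi_strictMono (show τ - μ < τ by linarith)
  linarith

lemma Wf_nonneg {τ μ : ℝ} (hμ : 0 ≤ μ) : 0 ≤ Wf τ μ := by
  unfold Wf
  have := Phi_mono (show τ - μ ≤ τ by linarith)
  linarith

lemma Wf_le_one (τ μ : ℝ) : |Wf τ μ| ≤ 1 := by
  unfold Wf
  rw [abs_le]
  constructor <;> nlinarith [Phi_nonneg τ, Phi_le_one τ, Phi_nonneg (τ - μ), Phi_le_one (τ - μ)]

lemma Wf_lt_Phi {τ μ : ℝ} : Wf τ μ < Phi τ := by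
  unfold Wf
  have := Phi_pos (τ - μ)
  linarith

lemma Wf_cont (τ : ℝ) : Continuous (fun m => Wf τ m) := by
  unfold Wf
  exact continuous_const.sub (Phi_continuous.comp (by continuity))

/-- product of two `stdPdf`s in exponent form -/
lemma stdPdf_mul (u v : ℝ) :
    stdPdf u * stdPdf v = ((Real.sqrt (2 * Real.pi))⁻¹)^2 * Real.exp (-(u^2 + v^2)/2) := by
  unfold stdPdf
  rw [show -(u^2 + v^2)/2 = -(u^2)/2 + -(v^2)/2 by ring, Real.exp_add]
  ring

lemma stdPdf_mul_le {τ τ' μ x : ℝ} (h : τ ≤ τ') (hx : μ ≤ x) :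
    stdPdf (τ' - μ) * stdPdf (τ - x) ≤ stdPdf (τ - μ) * stdPdf (τ' - x) := by
  rw [stdPdf_mul, stdPdf_mul]
  have hee : Real.exp (-((τ' - μ)^2 + (τ - x)^2)/2) ≤ Real.exp (-((τ - μ)^2 + (τ' - x)^2)/2) := by
    rw [Real.exp_le_exp]
    nlinarith [mul_nonneg (sub_nonneg.2 h) (sub_nonneg.2 hx)]
  have hc : (0:ℝ) ≤ ((Real.sqrt (2 * Real.pi))⁻¹)^2 := by positivity
  nlinarith

lemma stdPdf_mul_lt {τ τ' μ x : ℝ} (h : τ < τ') (hx : x < μ) :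
    stdPdf (τ' - x) * stdPdf (τ - μ) < stdPdf (τ - x) * stdPdf (τ' - μ) := by
  rw [stdPdf_mul, stdPdf_mul]
  have hee : Real.exp (-((τ' - x)^2 + (τ - μ)^2)/2) < Real.exp (-((τ - x)^2 + (τ' - μ)^2)/2) := by
    rw [Real.exp_lt_exp]
    nlinarith [mul_pos (sub_pos.2 h) (sub_pos.2 hx)]
  have hc : (0:ℝ) < ((Real.sqrt (2 * Real.pi))⁻¹)^2 := by positivity
  nlinarith

/-- The crucial pointwise comparison. -/
lemma key_pointwise {τ τ' : ℝ} (h : τ ≤ τ') (μ m : ℝ) :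
    stdPdf (τ' - μ) * (Wf τ m - Wf τ μ) ≤ stdPdf (τ - μ) * (Wf τ' m - Wf τ' μ) := by
  rw [Wf_sub, Wf_sub, ← intervalIntegral.integral_const_mul, ← intervalIntegral.integral_const_mul]
  rcases le_total μ m with hm | hm
  · apply intervalIntegral.integral_mono_on hm
      ((continuous_const.mul (cont_aux τ)).intervalIntegrable _ _)
      ((continuous_const.mul (cont_aux τ')).intervalIntegrable _ _)
    intro x hx
    exact stdPdf_mul_le h hx.1
  · rw [intervalIntegral.integral_symm m μ, intervalIntegral.integral_symm m μ]
    apply neg_le_neg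
    apply intervalIntegral.integral_mono_on hm
      ((continuous_const.mul (cont_aux τ')).intervalIntegrable _ _)
      ((continuous_const.mul (cont_aux τ)).intervalIntegrable _ _)
    intro x hx
    have := stdPdf_mul_le h (show x ≤ μ from hx.2) (τ := τ) (τ' := τ')
    simp only [Pi.mul_apply]; linarith

lemma lam_pos {τ τ' μ : ℝ} (h : τ < τ') (hμ : 0 < μ) :
    0 < Wf τ μ * stdPdf (τ' - μ) - Wf τ' μ * stdPdf (τ - μ) := by
  have heq : Wf τ μ * stdPdf (τ' - μ) - Wf τ' μ * stdPdf (τ - μ)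
      = ∫ x in (0:ℝ)..μ, (stdPdf (τ - x) * stdPdf (τ' - μ) - stdPdf (τ' - x) * stdPdf (τ - μ)) := by
    rw [intervalIntegral.integral_sub (f := fun x => stdPdf (τ - x) * stdPdf (τ' - μ)) (g := fun x => stdPdf (τ' - x) * stdPdf (τ - μ))
      (((cont_aux τ).mul continuous_const).intervalIntegrable _ _)
      (((cont_aux τ').mul continuous_const).intervalIntegrable _ _),
      intervalIntegral.integral_mul_const, intervalIntegral.integral_mul_const,
      ← Wf_eq_integral, ← Wf_eq_integral]
  rw [heq]
  apply intervalIntegral.intervalIntegral_pos_of_pos_on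
  · apply ContinuousOn.intervalIntegrable
    apply Continuous.continuousOn
    exact ((cont_aux τ).mul continuous_const).sub ((cont_aux τ').mul continuous_const)
  · intro x hx
    have := stdPdf_mul_lt h hx.2
    linarith
  · exact hμ

lemma integrable_Wf (τ : ℝ) (H : Measure ℝ) [IsProbabilityMeasure H] :
    Integrable (fun m => Wf τ m) H := by
  apply Integrable.mono' (integrable_const (1:ℝ)) ((Wf_cont τ).aestronglyMeasurable)
  filter_upwards with m
  exact Wf_le_one τ m

/-- THE key Gaussian lemma. -/
lemma key_gauss {τ τ' μ : ℝ} (h : τ < τ') (hμ : 0 < μ) (H : Measure ℝ) [IsProbabilityMeasure H]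
    (hle : Wf τ μ * (∫ m, Wf τ' m ∂H) ≤ (∫ m, Wf τ m ∂H) * Wf τ' μ) :
    (∫ m, Wf τ m ∂H) ≤ Wf τ μ := by
  set lam := Wf τ μ * stdPdf (τ' - μ) - Wf τ' μ * stdPdf (τ - μ) with hlam
  have hlampos : 0 < lam := lam_pos h hμ
  set A := ∫ m, Wf τ m ∂H with hA
  set A' := ∫ m, Wf τ' m ∂H with hA'
  -- pointwise inequality
  have hptw : ∀ m : ℝ, lam * (Wf τ m - Wf τ μ)
      ≤ stdPdf (τ - μ) * (Wf τ μ * Wf τ' m - Wf τ m * Wf τ' μ) := by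
    intro m
    have hkp := key_pointwise h.le μ m
    have hfact : stdPdf (τ - μ) * (Wf τ μ * Wf τ' m - Wf τ m * Wf τ' μ)
        - lam * (Wf τ m - Wf τ μ)
        = Wf τ μ * (stdPdf (τ - μ) * (Wf τ' m - Wf τ' μ) - stdPdf (τ' - μ) * (Wf τ m - Wf τ μ)) := by
      rw [hlam]; ring
    have hW : 0 ≤ Wf τ μ := (Wf_pos hμ).le
    nlinarith [mul_nonneg hW (sub_nonneg.2 hkp)]
  -- integrate
  have hi1 : Integrable (fun m => lam * (Wf τ m - Wf τ μ)) H :=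
    (((integrable_Wf τ H).sub (integrable_const _)).const_mul lam)
  have hi2 : Integrable (fun m => stdPdf (τ - μ) * (Wf τ μ * Wf τ' m - Wf τ m * Wf τ' μ)) H := by
    apply Integrable.const_mul
    exact ((integrable_Wf τ' H).const_mul _).sub ((integrable_Wf τ H).mul_const _)
  have hint := integral_mono hi1 hi2 hptw
  rw [integral_const_mul, integral_const_mul] at hint
  rw [integral_sub (integrable_Wf τ H) (integrable_const _), integral_const] at hint
  rw [integral_sub ((integrable_Wf τ' H).const_mul _) ((integrable_Wf τ H).mul_const _)] at hint
  rw [integral_const_mul, integral_mul_const] at hint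
  simp only [measure_univ, ENNReal.toReal_one, probReal_univ, one_smul, smul_eq_mul] at hint
  have hstd : 0 ≤ stdPdf (τ - μ) := (stdPdf_pos _).le
  nlinarith [mul_nonneg hstd (sub_nonneg.2 hle)]

section Mixture
variable {ε : ℝ} {H : Measure ℝ} [IsProbabilityMeasure H]

lemma H_ae_pos (hH : H (Set.Ioi 0) = 1) : ∀ᵐ m ∂H, 0 < m := by
  rw [ae_iff]
  have he : {m : ℝ | ¬ 0 < m} = (Set.Ioi (0:ℝ))ᶜ := by ext m; simp
  rw [he, measure_compl measurableSet_Ioi (measure_ne_top H _), hH, measure_univ, tsub_self]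

lemma integrable_Phi_shift (t : ℝ) : Integrable (fun m => Phi (t - m)) H := by
  apply Integrable.mono' (integrable_const (1:ℝ))
  · exact (Phi_continuous.comp (continuous_const.sub continuous_id)).aestronglyMeasurable
  · filter_upwards with m
    rw [Real.norm_eq_abs, abs_of_pos (Phi_pos _)]
    exact Phi_le_one _

lemma intPhi_pos (t : ℝ) : 0 < ∫ m, Phi (t - m) ∂H := by
  rw [integral_pos_iff_support_of_nonneg_ae
    (Filter.Eventually.of_forall fun m => (Phi_pos _).le) (integrable_Phi_shift t)]
  have : Function.support (fun m => Phi (t - m)) = Set.univ := by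
    ext m; simp [Function.mem_support, (Phi_pos (t - m)).ne']
  rw [this, measure_univ]
  norm_num

lemma intPhi_lt_one (t : ℝ) : ∫ m, Phi (t - m) ∂H < 1 := by
  have hi : Integrable (fun m => 1 - Phi (t - m)) H := by
    exact (integrable_const (1:ℝ)).sub (integrable_Phi_shift (H := H) t)
  have h : 0 < ∫ m, (1 - Phi (t - m)) ∂H := by
    rw [integral_pos_iff_support_of_nonneg_ae
      (Filter.Eventually.of_forall fun m => by simp only [Pi.zero_apply]; linarith [Phi_lt_one (t - m)]) hi]
    have : Function.support (fun m => 1 - Phi (t - m)) = Set.univ := by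
      ext m; simp only [Function.mem_support, Set.mem_univ, iff_true]
      have := Phi_lt_one (t - m); intro hc; linarith
    rw [this, measure_univ]; norm_num
  rw [integral_sub (integrable_const _) (integrable_Phi_shift t), integral_const] at h
  simp only [measure_univ, ENNReal.toReal_one, probReal_univ, smul_eq_mul, one_mul] at h
  linarith

lemma osc_pos (hε0 : 0 ≤ ε) (hε1 : ε ≤ 1) (t : ℝ) : 0 < oneSidedCdf ε H t := by
  unfold oneSidedCdf
  rcases lt_or_ge ε 1 with h | h
  · nlinarith [Phi_pos t, intPhi_pos (H := H) t, mul_nonneg hε0 (intPhi_pos (H := H) t).le,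
      mul_pos (show (0:ℝ) < 1 - ε by linarith) (Phi_pos t)]
  · have : ε = 1 := le_antisymm hε1 h
    subst this
    simpa using intPhi_pos (H := H) t

lemma osc_lt_one (hε0 : 0 ≤ ε) (hε1 : ε ≤ 1) (t : ℝ) : oneSidedCdf ε H t < 1 := by
  unfold oneSidedCdf
  rcases lt_or_ge ε 1 with h | h
  · nlinarith [Phi_lt_one t, intPhi_lt_one (H := H) t,
      mul_pos (show (0:ℝ) < 1 - ε by linarith) (show (0:ℝ) < 1 - Phi t by linarith [Phi_lt_one t]),
      mul_nonneg hε0 (show (0:ℝ) ≤ 1 - ∫ m, Phi (t - m) ∂H by linarith [intPhi_lt_one (H := H) t])]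
  · have : ε = 1 := le_antisymm hε1 h
    subst this
    simpa using intPhi_lt_one (H := H) t

lemma osc_mono (hε0 : 0 ≤ ε) (hε1 : ε ≤ 1) : Monotone (oneSidedCdf ε H) := by
  intro s t hst
  unfold oneSidedCdf
  have h1 : Phi s ≤ Phi t := Phi_mono hst
  have h2 : ∫ m, Phi (s - m) ∂H ≤ ∫ m, Phi (t - m) ∂H := by
    apply integral_mono (integrable_Phi_shift s) (integrable_Phi_shift t)
    intro m; exact Phi_mono (by linarith)
  have := mul_le_mul_of_nonneg_left h1 (show (0:ℝ) ≤ 1 - ε by linarith)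
  have := mul_le_mul_of_nonneg_left h2 hε0
  linarith

lemma osc_le_Phi (hε0 : 0 ≤ ε) (hε1 : ε ≤ 1) (hH : H (Set.Ioi 0) = 1) (t : ℝ) :
    oneSidedCdf ε H t ≤ Phi t := by
  unfold oneSidedCdf
  have h2 : ∫ m, Phi (t - m) ∂H ≤ Phi t := by
    have : ∫ m, Phi (t - m) ∂H ≤ ∫ _m : ℝ, Phi t ∂H := by
      apply integral_mono_ae (integrable_Phi_shift t) (integrable_const _)
      filter_upwards [H_ae_pos hH] with m hm
      exact Phi_mono (by linarith)
    simpa [measure_univ] using this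
  have := mul_le_mul_of_nonneg_left h2 hε0
  nlinarith [Phi_pos t]

lemma osc_continuous (hε0 : 0 ≤ ε) (hε1 : ε ≤ 1) : Continuous (oneSidedCdf ε H) := by
  unfold oneSidedCdf
  apply Continuous.add (continuous_const.mul Phi_continuous)
  apply Continuous.mul continuous_const
  apply continuous_of_dominated (bound := fun _ => (1:ℝ))
  · intro t
    exact (Phi_continuous.comp (continuous_const.sub continuous_id)).aestronglyMeasurable
  · intro t
    filter_upwards with m
    rw [Real.norm_eq_abs, abs_of_pos (Phi_pos _)]
    exact Phi_le_one _
  · exact integrable_const _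
  · filter_upwards with m
    exact Phi_continuous.comp (continuous_sub_right m)

lemma Phi_sub_osc (t : ℝ) : Phi t - oneSidedCdf ε H t = ε * ∫ m, Wf t m ∂H := by
  unfold oneSidedCdf
  have : ∫ m, Wf t m ∂H = Phi t - ∫ m, Phi (t - m) ∂H := by
    unfold Wf
    rw [integral_sub (integrable_const _) (integrable_Phi_shift t), integral_const]
    simp [measure_univ]
  rw [this]; ring

lemma intWf_nonneg (hH : H (Set.Ioi 0) = 1) (t : ℝ) : 0 ≤ ∫ m, Wf t m ∂H := by
  apply integral_nonneg_of_ae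
  filter_upwards [H_ae_pos hH] with m hm
  exact Wf_nonneg hm.le

lemma intWf_pos (hH : H (Set.Ioi 0) = 1) (t : ℝ) : 0 < ∫ m, Wf t m ∂H := by
  rw [integral_pos_iff_support_of_nonneg_ae ?_ (integrable_Wf t H)]
  · apply lt_of_lt_of_le _ (measure_mono (show Set.Ioi (0:ℝ) ⊆ Function.support (fun m => Wf t m) from ?_))
    · rw [hH]; norm_num
    · intro m hm
      exact (Wf_pos hm).ne'
  · filter_upwards [H_ae_pos hH] with m hm
    exact Wf_nonneg hm.le

end Mixture

end PhiBlock

/-- Envelope algebra: the W-inequality at a point implies the cdf lies between envelopes. -/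
lemma env_algebra {n : ℕ} (hn : 0 < n) {a G F : ℝ} (ha : 0 < a) (hG0 : 0 ≤ G) (hG1 : G ≤ 1)
    (hF0 : 0 < F) (hF1 : F < 1)
    (h : |G - F| ≤ a / Real.sqrt n * Real.sqrt (F * (1 - F))) :
    (2*G + a^2/n - a / Real.sqrt n * Real.sqrt (a^2/n + 4*G - 4*G^2)) / (2*(1 + a^2/n)) ≤ F
    ∧ F ≤ (2*G + a^2/n + a / Real.sqrt n * Real.sqrt (a^2/n + 4*G - 4*G^2)) / (2*(1 + a^2/n)) := by
  have hnR : (0:ℝ) < n := by exact_mod_cast hn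
  set c : ℝ := a^2/n with hc_def
  set r : ℝ := a / Real.sqrt n with hr_def
  have hr : 0 < r := div_pos ha (Real.sqrt_pos.2 hnR)
  have hr2 : r^2 = c := by
    rw [hr_def, hc_def, div_pow, Real.sq_sqrt hnR.le]
  have hc : 0 < c := by rw [← hr2]; positivity
  have hFF : 0 ≤ F * (1 - F) := by nlinarith
  have h2 : (G - F)^2 ≤ c * (F * (1-F)) := by
    have := pow_le_pow_left₀ (abs_nonneg (G - F)) h 2
    rw [sq_abs, mul_pow, hr2, Real.sq_sqrt hFF] at this
    exact this
  set s : ℝ := Real.sqrt (c + 4*G - 4*G^2) with hs_def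
  have hrad : 0 ≤ c + 4*G - 4*G^2 := by nlinarith
  have hs0 : 0 ≤ s := Real.sqrt_nonneg _
  have hs2 : s^2 = c + 4*G - 4*G^2 := Real.sq_sqrt hrad
  have hrs : 0 ≤ r * s := by positivity
  have key : (2*(1+c)*F - 2*G - c)^2 ≤ (r*s)^2 := by
    have hid : c*(c+4*G-4*G^2) - (2*(1+c)*F-2*G-c)^2 = 4*(1+c)*(c*(F*(1-F)) - (G-F)^2) := by
      ring
    have h1c : (0:ℝ) < 1 + c := by linarith
    rw [mul_pow, hr2, hs2]
    nlinarith [mul_nonneg (by linarith : (0:ℝ) ≤ 4*(1+c)) (sub_nonneg.2 h2)]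
  have hle : 2*(1+c)*F - 2*G - c ≤ r*s := by nlinarith [key, hrs]
  have hge : -(r*s) ≤ 2*(1+c)*F - 2*G - c := by nlinarith [key, hrs]
  have hd : (0:ℝ) < 2*(1+c) := by linarith
  constructor
  · rw [div_le_iff₀ hd]; linarith
  · rw [le_div_iff₀ hd]; linarith

section EmpCdf

lemma empCdf_nonneg (n : ℕ) (X : Fin n → ℝ) (t : ℝ) : 0 ≤ empCdf n X t := by
  unfold empCdf
  apply mul_nonneg (by positivity)
  apply Finset.sum_nonneg
  intro i _
  split <;> norm_num

lemma empCdf_le_one (n : ℕ) (X : Fin n → ℝ) (t : ℝ) : empCdf n X t ≤ 1 := by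
  unfold empCdf
  rcases Nat.eq_zero_or_pos n with h | h
  · subst h; simp
  have hnR : (0:ℝ) < n := by exact_mod_cast h
  have hsum : (∑ i, if X i ≤ t then (1:ℝ) else 0) ≤ n := by
    calc (∑ i : Fin n, if X i ≤ t then (1:ℝ) else 0) ≤ ∑ i : Fin n, 1 := by
          apply Finset.sum_le_sum; intro i _; split <;> norm_num
      _ = n := by simp
  rw [inv_mul_le_iff₀ hnR, mul_one]
  exact hsum

lemma empCdf_mono (n : ℕ) (X : Fin n → ℝ) : Monotone (empCdf n X) := by
  intro s t hst
  unfold empCdf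
  apply mul_le_mul_of_nonneg_left _ (by positivity)
  apply Finset.sum_le_sum
  intro i _
  by_cases h : X i ≤ s
  · rw [if_pos h, if_pos (le_trans h hst)]
  · rw [if_neg h]; split <;> norm_num

lemma empCdf_congr_of_gap {n : ℕ} {X : Fin n → ℝ} {u v : ℝ} (huv : u ≤ v)
    (hgap : ∀ i, ¬(u < X i ∧ X i ≤ v)) : empCdf n X v = empCdf n X u := by
  unfold empCdf
  congr 1
  apply Finset.sum_congr rfl
  intro i _
  by_cases h : X i ≤ u
  · rw [if_pos h, if_pos (le_trans h huv)]
  · rw [if_neg h]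
    rw [if_neg]
    intro hv
    exact hgap i ⟨lt_of_not_ge h, hv⟩

lemma empCdf_eq_zero {n : ℕ} {X : Fin n → ℝ} {t : ℝ} (h : ∀ i, ¬ X i ≤ t) :
    empCdf n X t = 0 := by
  unfold empCdf
  rw [Finset.sum_congr rfl (fun i _ => if_neg (h i))]
  simp

end EmpCdf

section Grid

lemma gridPt_lt_succ {n : ℕ} (hn : 2 ≤ n) (j : ℕ) : gridPt n j < gridPt n (j+1) := by
  unfold gridPt
  have hl : 0 < Real.log n := Real.log_pos (by exact_mod_cast hn)
  have hs : 0 < Real.sqrt (2 * Real.log n) := Real.sqrt_pos.2 (by linarith)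
  apply div_lt_div_of_pos_right _ hs
  push_cast
  linarith

lemma gridPt_nonneg {n : ℕ} {j : ℕ} (hj : 1 ≤ j) : 0 ≤ gridPt n j := by
  unfold gridPt
  apply div_nonneg _ (Real.sqrt_nonneg _)
  have : (1:ℝ) ≤ j := by exact_mod_cast hj
  linarith

/-- grid points with index ≤ `⌈2 log n⌉` are at most `√(2 log n)`. -/
lemma gridPt_le {n : ℕ} (hn : 2 ≤ n) {j : ℕ} (hj : j ≤ Nat.ceil (2 * Real.log n) + 1) :
    gridPt n j ≤ Real.sqrt (2 * Real.log n) + 1 / Real.sqrt (2 * Real.log n) := by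
  unfold gridPt
  have hl : 0 < Real.log n := Real.log_pos (by exact_mod_cast hn)
  have h2l : 0 < 2 * Real.log n := by linarith
  have hs : 0 < Real.sqrt (2 * Real.log n) := Real.sqrt_pos.2 h2l
  rw [div_le_iff₀ hs, add_mul, div_mul_cancel₀ _ hs.ne', Real.mul_self_sqrt h2l.le]
  have h1 : (j:ℝ) - 1 ≤ Nat.ceil (2 * Real.log n) := by
    have : (j:ℝ) ≤ Nat.ceil (2 * Real.log n) + 1 := by exact_mod_cast hj
    linarith
  have h2 : (Nat.ceil (2 * Real.log n) : ℝ) < 2 * Real.log n + 1 := by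
    exact_mod_cast Nat.ceil_lt_add_one h2l.le
  linarith

lemma gridPt_le' {n : ℕ} (hn : 2 ≤ n) {j : ℕ} (hj : j ≤ Nat.ceil (2 * Real.log n)) :
    gridPt n j ≤ Real.sqrt (2 * Real.log n) := by
  unfold gridPt
  have hl : 0 < Real.log n := Real.log_pos (by exact_mod_cast hn)
  have h2l : 0 < 2 * Real.log n := by linarith
  have hs : 0 < Real.sqrt (2 * Real.log n) := Real.sqrt_pos.2 h2l
  rw [div_le_iff₀ hs, Real.mul_self_sqrt h2l.le]
  have h2 : (Nat.ceil (2 * Real.log n) : ℝ) < 2 * Real.log n + 1 := by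
    exact_mod_cast Nat.ceil_lt_add_one h2l.le
  have h1 : (j:ℝ) ≤ Nat.ceil (2 * Real.log n) := by exact_mod_cast hj
  linarith

end Grid

section WBound

variable {n : ℕ} {a ε : ℝ} {H : Measure ℝ} [IsProbabilityMeasure H]

/-- Uniform bound on the normalized empirical process over the constraint set. -/
lemma wn_bddAbove (hn : 2 ≤ n) (hε0 : 0 ≤ ε) (hε1 : ε ≤ 1) (x : Fin n → ℝ) :
    BddAbove ((fun t => Real.sqrt n * |empCdf n x t - oneSidedCdf ε H t| /
      Real.sqrt (oneSidedCdf ε H t * (1 - oneSidedCdf ε H t))) ''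
      {t : ℝ | empCdf n x 0 - Real.sqrt (3 * Real.log n / n) ≤ oneSidedCdf ε H t ∧
        oneSidedCdf ε H t ≤ Phi (Real.sqrt (2 * Real.log n))}) := by
  have hne : Nonempty (Fin n) := ⟨⟨0, by omega⟩⟩
  set F := oneSidedCdf ε H with hF
  refine ⟨Real.sqrt n / Real.sqrt ((min (F (Finset.univ.inf' Finset.univ_nonempty x)) 1) *
    (1 - Phi (Real.sqrt (2 * Real.log n)))), ?_⟩
  rintro v ⟨y, ⟨hy1, hy2⟩, rfl⟩
  simp only [Set.mem_setOf_eq] at *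
  set tc := Real.sqrt (2 * Real.log n) with htc
  set xmin := Finset.univ.inf' (by exact Finset.univ_nonempty) x with hxmin
  set q := min (F xmin) 1 with hq
  set Q := q * (1 - Phi tc) with hQ
  have hFy0 : 0 < F y := osc_pos hε0 hε1 y
  have hFy1 : F y < 1 := osc_lt_one hε0 hε1 y
  have hPhitc : Phi tc < 1 := Phi_lt_one tc
  have hq0 : 0 < q := lt_min (osc_pos hε0 hε1 xmin) one_pos
  have hQ0 : 0 < Q := mul_pos hq0 (by linarith)
  have hden0 : 0 < Real.sqrt (F y * (1 - F y)) := Real.sqrt_pos.2 (mul_pos hFy0 (by linarith))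
  -- main step : |empCdf n x y - F y| * √Q ≤ √(F y * (1 - F y))
  have hmain : |empCdf n x y - F y| * Real.sqrt Q ≤ Real.sqrt (F y * (1 - F y)) := by
    by_cases hcase : ∃ i, x i ≤ y
    · -- some sample point below y : F y ≥ F xmin ≥ q
      obtain ⟨i, hi⟩ := hcase
      have hxy : xmin ≤ y := le_trans (Finset.inf'_le _ (Finset.mem_univ i)) hi
      have hFq : q ≤ F y := le_trans (min_le_left _ _) (osc_mono hε0 hε1 hxy)
      have habs : |empCdf n x y - F y| ≤ 1 := by
        rw [abs_le]
        constructor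
        · have := empCdf_nonneg n x y; linarith
        · have := empCdf_le_one n x y; linarith
      calc |empCdf n x y - F y| * Real.sqrt Q ≤ 1 * Real.sqrt Q := by
            apply mul_le_mul_of_nonneg_right habs (Real.sqrt_nonneg _)
        _ = Real.sqrt Q := one_mul _
        _ ≤ Real.sqrt (F y * (1 - F y)) := by
            apply Real.sqrt_le_sqrt
            rw [hQ]
            apply mul_le_mul hFq (by linarith) (by linarith) hFy0.le
    · -- no sample below y : empirical cdf vanishes
      push_neg at hcase
      rw [empCdf_eq_zero (fun i => not_le.2 (hcase i))]
      rw [abs_of_nonpos (by linarith), neg_sub, sub_zero]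
      have hQle : Q ≤ 1 - F y := by
        have h2 : q ≤ 1 := min_le_right _ _
        have h3 : 1 - Phi tc ≤ 1 - F y := by linarith [hy2]
        calc Q ≤ 1 * (1 - Phi tc) := by
              apply mul_le_mul_of_nonneg_right h2 (by linarith)
          _ = 1 - Phi tc := one_mul _
          _ ≤ 1 - F y := h3
      have hsq : (F y * Real.sqrt Q)^2 ≤ F y * (1 - F y) := by
        rw [mul_pow, Real.sq_sqrt hQ0.le]
        nlinarith [mul_le_mul_of_nonneg_left hQle (sq_nonneg (F y)),
          mul_le_mul_of_nonneg_right (show F y^2 ≤ F y by nlinarith [hFy0, hFy1])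
            (show (0:ℝ) ≤ 1 - F y by linarith)]
      calc F y * Real.sqrt Q = Real.sqrt ((F y * Real.sqrt Q)^2) :=
            (Real.sqrt_sq (by positivity)).symm
        _ ≤ Real.sqrt (F y * (1 - F y)) := Real.sqrt_le_sqrt hsq
  -- conclude by division juggling
  rw [div_le_div_iff₀ hden0 (Real.sqrt_pos.2 hQ0)]
  have hn0 : (0:ℝ) ≤ Real.sqrt n := Real.sqrt_nonneg _
  calc Real.sqrt n * |empCdf n x y - F y| * Real.sqrt Q
      = Real.sqrt n * (|empCdf n x y - F y| * Real.sqrt Q) := by ring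
    _ ≤ Real.sqrt n * Real.sqrt (F y * (1 - F y)) := by
        apply mul_le_mul_of_nonneg_left hmain hn0
    _ = Real.sqrt n * Real.sqrt (F y * (1 - F y)) := rfl

/-- From `WnPP < a` we obtain the envelope property at every point of the constraint set. -/
lemma env_at_point (hn : 2 ≤ n) (ha : 0 < a) (hε0 : 0 ≤ ε) (hε1 : ε ≤ 1)
    (x : Fin n → ℝ) (y : ℝ)
    (hW : WnPP 3 n (oneSidedCdf ε H) x < a)
    (hy1 : empCdf n x 0 - Real.sqrt (3 * Real.log n / n) ≤ oneSidedCdf ε H y)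
    (hy2 : oneSidedCdf ε H y ≤ Phi (Real.sqrt (2 * Real.log n))) :
    envM n a (empCdf n x) y ≤ oneSidedCdf ε H y ∧
      oneSidedCdf ε H y ≤ envP n a (empCdf n x) y := by
  set F := oneSidedCdf ε H with hF
  have hFy0 : 0 < F y := osc_pos hε0 hε1 y
  have hFy1 : F y < 1 := osc_lt_one hε0 hε1 y
  have hbdd := wn_bddAbove (H := H) hn hε0 hε1 x
  have hmem : Real.sqrt n * |empCdf n x y - F y| / Real.sqrt (F y * (1 - F y)) ≤
      WnPP 3 n F x := by
    apply le_csSup hbdd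
    exact ⟨y, ⟨hy1, hy2⟩, rfl⟩
  have hval : Real.sqrt n * |empCdf n x y - F y| / Real.sqrt (F y * (1 - F y)) < a :=
    lt_of_le_of_lt hmem hW
  have hnR : (0:ℝ) < n := by positivity
  have hsn : 0 < Real.sqrt n := Real.sqrt_pos.2 hnR
  have hden0 : 0 < Real.sqrt (F y * (1 - F y)) := Real.sqrt_pos.2 (mul_pos hFy0 (by linarith))
  have hineq : |empCdf n x y - F y| ≤ a / Real.sqrt n * Real.sqrt (F y * (1 - F y)) := by
    rw [div_lt_iff₀ hden0] at hval
    rw [div_mul_eq_mul_div, le_div_iff₀ hsn]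
    nlinarith
  have := env_algebra (n := n) (by omega) ha (empCdf_nonneg n x y) (empCdf_le_one n x y)
    hFy0 hFy1 hineq
  unfold envM envP
  exact this

end WBound

section Core

variable {n : ℕ} {a ε : ℝ} {H : Measure ℝ} [IsProbabilityMeasure H]

lemma core_epsHatJ (hn : 2 ≤ n) (hε0 : 0 ≤ ε) (hε1 : ε ≤ 1) (hH : H (Set.Ioi 0) = 1)
    (x : Fin n → ℝ) (j : ℕ)
    (hEP : oneSidedCdf ε H (gridPt n j) ≤ envP n a (empCdf n x) (gridPt n j))
    (hEM : envM n a (empCdf n x) (gridPt n (j+1)) ≤ oneSidedCdf ε H (gridPt n (j+1))) :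
    epsHatJ n a x j ≤ ε := by
  unfold epsHatJ
  split
  case isFalse h => exact hε0
  case isTrue hcond =>
    set τ := gridPt n j with hτ
    set τ' := gridPt n (j+1) with hτ'
    have hττ : τ < τ' := gridPt_lt_succ hn j
    have hmu : muHatJ n a x j = hcond.choose := dif_pos hcond
    obtain ⟨hμpos, hDeq⟩ := hcond.choose_spec
    set μ := hcond.choose with hμdef
    set num := Phi τ - envP n a (empCdf n x) τ with hnum
    set den := Phi τ' - envM n a (empCdf n x) τ' with hden
    set A := ∫ m, Wf τ m ∂H with hA
    set A' := ∫ m, Wf τ' m ∂H with hA'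
    have hidA : Phi τ - oneSidedCdf ε H τ = ε * A := Phi_sub_osc τ
    have hidA' : Phi τ' - oneSidedCdf ε H τ' = ε * A' := Phi_sub_osc τ'
    have hnumle : num ≤ ε * A := by rw [hnum, ← hidA]; linarith [hEP]
    have hdenge : ε * A' ≤ den := by rw [hden, ← hidA']; linarith [hEM]
    have hWpos : 0 < Wf τ μ := Wf_pos hμpos
    have hgoal : (Phi τ - envP n a (empCdf n x) τ) / (Phi τ - Phi (τ - muHatJ n a x j)) =
        num / Wf τ μ := by rw [hmu]; rfl
    rw [hgoal]
    rcases le_or_gt num 0 with hnle | hnpos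
    · have := div_nonpos_of_nonpos_of_nonneg hnle hWpos.le
      linarith
    · have hAnn : 0 ≤ A := intWf_nonneg hH τ
      have hεpos : 0 < ε := by nlinarith
      have hA'pos : 0 < A' := intWf_pos hH τ'
      have hdenpos : 0 < den := lt_of_lt_of_le (by positivity) hdenge
      have hW'pos : 0 < Wf τ' μ := Wf_pos hμpos
      have hcross : Wf τ μ * den = num * Wf τ' μ := by
        have : Wf τ μ / Wf τ' μ = num / den := hDeq
        exact (div_eq_div_iff hW'pos.ne' hdenpos.ne').1 this
      have hkeyhyp : Wf τ μ * A' ≤ A * Wf τ' μ := by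
        have h1 : Wf τ μ * (ε * A') ≤ num * Wf τ' μ := by
          rw [← hcross]
          exact mul_le_mul_of_nonneg_left hdenge hWpos.le
        have h2 : num * Wf τ' μ ≤ (ε * A) * Wf τ' μ :=
          mul_le_mul_of_nonneg_right hnumle hW'pos.le
        have h3 : ε * (Wf τ μ * A') ≤ ε * (A * Wf τ' μ) := by nlinarith
        exact le_of_mul_le_mul_left h3 hεpos
      have hkey : A ≤ Wf τ μ := key_gauss hττ hμpos H hkeyhyp
      rw [div_le_iff₀ hWpos]
      calc num ≤ ε * A := hnumle
        _ ≤ ε * Wf τ μ := mul_le_mul_of_nonneg_left hkey hεpos.le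
        _ = ε * Wf τ μ := rfl

lemma core_det (hε0 : 0 ≤ ε)
    (x : Fin n → ℝ)
    (hall : ∀ j ∈ Set.Icc 1 (Nat.ceil (2 * Real.log n)), epsHatJ n a x j ≤ ε) :
    epsHatStar n a x ≤ ε := by
  unfold epsHatStar
  apply Real.sSup_le _ hε0
  rintro v ⟨j, hj, rfl⟩
  exact hall j hj

end Core

section Prob
variable {n : ℕ} {Ω : Type} [MeasurableSpace Ω] {P : Measure Ω} [IsProbabilityMeasure P]

/-- Chebyshev bound for the empirical cdf at 0. -/
lemma cheb_bound (hn : 2 ≤ n) (X : Fin n → Ω → ℝ) (F : ℝ → ℝ)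
    (hF0 : 0 ≤ F 0) (hF1 : F 0 ≤ 1) (hiid : IIDWithCdf P X F) :
    P {ω | F 0 + Real.sqrt (3 * Real.log n / n) < empCdf n (fun i => X i ω) 0}
      ≤ ENNReal.ofReal (1 / (12 * Real.log n)) := by
  obtain ⟨hmeas, hindep, hcdf⟩ := hiid
  have hlog : 0 < Real.log n := Real.log_pos (by exact_mod_cast hn)
  have hnR : (0:ℝ) < n := by positivity
  set s : ℝ := Real.sqrt (3 * Real.log n / n) with hs_def
  have hs_pos : 0 < s := Real.sqrt_pos.2 (by positivity)
  have hs_sq : s^2 = 3 * Real.log n / n := Real.sq_sqrt (by positivity)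
  -- indicator variables
  set Z : Fin n → Ω → ℝ := fun i ω => if X i ω ≤ 0 then (1:ℝ) else 0 with hZ
  have hZset : ∀ i, MeasurableSet {ω | X i ω ≤ 0} := fun i => (hmeas i) measurableSet_Iic
  have hZmeas : ∀ i, Measurable (Z i) := by
    intro i
    exact Measurable.ite (hZset i) measurable_const measurable_const
  have hZind : ∀ i, Z i = Set.indicator {ω | X i ω ≤ 0} (fun _ => (1:ℝ)) := by
    intro i
    ext ω
    rw [Set.indicator_apply]
    rfl
  have hZmem : ∀ i, MemLp (Z i) 2 P := by
    intro i
    apply MemLp.of_bound (hZmeas i).aestronglyMeasurable 1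
    filter_upwards with ω
    rw [hZ]
    simp only [Real.norm_eq_abs]
    split <;> norm_num
  have hZint : ∀ i, ∫ ω, Z i ω ∂P = F 0 := by
    intro i
    rw [show (fun ω => Z i ω) = Set.indicator {ω | X i ω ≤ 0} (fun _ => (1:ℝ)) from hZind i]
    rw [integral_indicator_const (1:ℝ) (hZset i), measureReal_def, hcdf i 0, smul_eq_mul, mul_one,
      ENNReal.toReal_ofReal hF0]
  have hZvar : ∀ i, variance (Z i) P ≤ 1/4 := by
    intro i
    rw [variance_eq_sub (hZmem i)]
    have hsq : ∀ ω, (Z i ^ 2) ω = Z i ω := by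
      intro ω
      simp only [Pi.pow_apply, hZ]
      split <;> norm_num
    rw [show ∫ ω, (Z i ^2) ω ∂P = ∫ ω, Z i ω ∂P from integral_congr_ae
      (Filter.Eventually.of_forall hsq)]
    rw [hZint i]
    nlinarith [sq_nonneg (F 0 - 1/2)]
  -- the sum
  set Sn : Ω → ℝ := ∑ i, Z i with hSn
  have hSnmem : MemLp Sn 2 P := memLp_finset_sum' _ (fun i _ => hZmem i)
  have hSn_apply : ∀ ω, Sn ω = ∑ i, Z i ω := by
    intro ω; rw [hSn]; simp [Finset.sum_apply]
  have hSnint : ∫ ω, Sn ω ∂P = n * F 0 := by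
    rw [show (fun ω => Sn ω) = fun ω => ∑ i, Z i ω from funext hSn_apply]
    rw [integral_finset_sum _ (fun i _ => ((hZmem i).integrable one_le_two))]
    simp [hZint]
  have hSnvar : variance Sn P ≤ n / 4 := by
    rw [hSn, IndepFun.variance_sum (fun i _ => hZmem i) ?_]
    · calc (∑ i : Fin n, variance (Z i) P) ≤ ∑ i : Fin n, (1/4 : ℝ) :=
          Finset.sum_le_sum (fun i _ => hZvar i)
        _ = n / 4 := by simp; ring
    · intro i _ j _ hij
      have hf : Measurable (fun v : ℝ => if v ≤ 0 then (1:ℝ) else 0) :=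
        Measurable.ite measurableSet_Iic measurable_const measurable_const
      exact (hindep.indepFun hij).comp hf hf
  -- Chebyshev
  have hc : (0:ℝ) < n * s := by positivity
  have hcheb := meas_ge_le_variance_div_sq (μ := P) hSnmem hc
  rw [hSnint] at hcheb
  -- event inclusion
  have hincl : {ω | F 0 + s < empCdf n (fun i => X i ω) 0}
      ⊆ {ω | n * s ≤ |Sn ω - n * F 0|} := by
    intro ω hω
    simp only [Set.mem_setOf_eq] at *
    have hemp : empCdf n (fun i => X i ω) 0 = (n:ℝ)⁻¹ * Sn ω := by
      unfold empCdf
      rw [hSn_apply]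
    rw [hemp] at hω
    have h1 : n * (F 0 + s) < Sn ω := by
      rw [← mul_lt_mul_iff_right₀ (inv_pos.2 hnR)]
      calc (n:ℝ)⁻¹ * (n * (F 0 + s)) = F 0 + s := by field_simp
        _ < (n:ℝ)⁻¹ * Sn ω := hω
    have h2 : n * s ≤ Sn ω - n * F 0 := by nlinarith
    calc (n:ℝ) * s ≤ Sn ω - n * F 0 := h2
      _ ≤ |Sn ω - n * F 0| := le_abs_self _
  calc P {ω | F 0 + s < empCdf n (fun i => X i ω) 0}
      ≤ P {ω | n * s ≤ |Sn ω - n * F 0|} := measure_mono hincl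
    _ ≤ ENNReal.ofReal (variance Sn P / (n * s)^2) := hcheb
    _ ≤ ENNReal.ofReal (1 / (12 * Real.log n)) := by
        apply ENNReal.ofReal_le_ofReal
        have hden : (n * s)^2 = n * (3 * Real.log n) := by
          rw [mul_pow, hs_sq]
          field_simp
        rw [hden]
        rw [div_le_div_iff₀ (by positivity) (by positivity)]
        nlinarith [hSnvar, hnR, hlog]

/-- Union bound for a sample falling into an interval. -/
lemma gap_prob (X : Fin n → Ω → ℝ) (F : ℝ → ℝ) (hmono : Monotone F) (hF0 : ∀ t, 0 ≤ F t)
    (hiid : IIDWithCdf P X F) {u v : ℝ} (huv : u ≤ v) :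
    P (⋃ i, {ω | u < X i ω ∧ X i ω ≤ v}) ≤ ENNReal.ofReal (n * (F v - F u)) := by
  obtain ⟨hmeas, hindep, hcdf⟩ := hiid
  have hone : ∀ i : Fin n, P {ω | u < X i ω ∧ X i ω ≤ v} = ENNReal.ofReal (F v - F u) := by
    intro i
    have hseteq : {ω | u < X i ω ∧ X i ω ≤ v} = {ω | X i ω ≤ v} \ {ω | X i ω ≤ u} := by
      ext ω
      simp only [Set.mem_setOf_eq, Set.mem_diff]
      constructor
      · rintro ⟨h1, h2⟩; exact ⟨h2, not_le.2 h1⟩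
      · rintro ⟨h1, h2⟩; exact ⟨not_le.1 h2, h1⟩
    have hdiff := measure_diff (μ := P) (s₁ := {ω | X i ω ≤ v}) (s₂ := {ω | X i ω ≤ u})
      (fun ω hω => le_trans hω huv)
      ((hmeas i) measurableSet_Iic).nullMeasurableSet (measure_ne_top _ _)
    rw [hseteq, hdiff, hcdf i v, hcdf i u, ← ENNReal.ofReal_sub _ (hF0 u)]
  calc P (⋃ i, {ω | u < X i ω ∧ X i ω ≤ v}) ≤ ∑ i : Fin n, P {ω | u < X i ω ∧ X i ω ≤ v} :=
        measure_iUnion_fintype_le _ _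
    _ = ∑ _i : Fin n, ENNReal.ofReal (F v - F u) := by
        apply Finset.sum_congr rfl; intro i _; rw [hone i]
    _ = (n : ℕ) • ENNReal.ofReal (F v - F u) := by
        rw [Finset.sum_const, Finset.card_univ, Fintype.card_fin]
    _ ≤ ENNReal.ofReal (n * (F v - F u)) := by
        rcases le_or_gt (F v - F u) 0 with h | h
        · rw [ENNReal.ofReal_eq_zero.2 h]
          simp
        · rw [nsmul_eq_mul, ← ENNReal.ofReal_natCast n, ← ENNReal.ofReal_mul (by positivity)]

/-- Tail gap of Phi beyond `√(2 log n)`. -/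
lemma Phi_tail_gap (hn : 2 ≤ n) :
    (n:ℝ) * (Phi (gridPt n (Nat.ceil (2 * Real.log n) + 1)) - Phi (Real.sqrt (2 * Real.log n)))
      ≤ 1 / (Real.sqrt (2 * Real.pi) * Real.sqrt (2 * Real.log n)) := by
  have hlog : 0 < Real.log n := Real.log_pos (by exact_mod_cast hn)
  have h2l : 0 < 2 * Real.log n := by linarith
  set tc := Real.sqrt (2 * Real.log n) with htc
  have htc0 : 0 < tc := Real.sqrt_pos.2 h2l
  set b := gridPt n (Nat.ceil (2 * Real.log n) + 1) with hb
  have hnR : (0:ℝ) < n := by positivity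
  have hble : b ≤ tc + 1 / tc := gridPt_le hn (le_refl _)
  rcases le_or_gt b tc with h | h
  · have : Phi b - Phi tc ≤ 0 := by linarith [Phi_mono h]
    have hrhs : (0:ℝ) ≤ 1 / (Real.sqrt (2 * Real.pi) * tc) := by positivity
    nlinarith
  · have hstdtc : stdPdf tc = (Real.sqrt (2 * Real.pi))⁻¹ * (n:ℝ)⁻¹ := by
      unfold stdPdf
      rw [htc, Real.sq_sqrt h2l.le]
      rw [show -(2 * Real.log n) / 2 = -Real.log n by ring]
      rw [Real.exp_neg, Real.exp_log hnR]
    have hgap : Phi b - Phi tc ≤ (b - tc) * stdPdf tc := by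
      rw [Phi_sub_Phi]
      calc (∫ x in tc..b, stdPdf x) ≤ ∫ _x in tc..b, stdPdf tc := by
            apply intervalIntegral.integral_mono_on h.le
              (stdPdf_cont.intervalIntegrable _ _)
              (intervalIntegrable_const)
            intro x hx
            unfold stdPdf
            apply mul_le_mul_of_nonneg_left _ (by positivity)
            rw [Real.exp_le_exp]
            have hx1 : tc ≤ x := hx.1
            have : tc^2 ≤ x^2 := by nlinarith
            linarith [this]
        _ = (b - tc) * stdPdf tc := by
            rw [intervalIntegral.integral_const, smul_eq_mul]
    have hbtc : b - tc ≤ 1 / tc := by linarith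
    have hstd_pos : 0 < stdPdf tc := stdPdf_pos tc
    calc (n:ℝ) * (Phi b - Phi tc) ≤ n * ((b - tc) * stdPdf tc) := by
          apply mul_le_mul_of_nonneg_left hgap hnR.le
      _ ≤ n * ((1/tc) * ((Real.sqrt (2 * Real.pi))⁻¹ * (n:ℝ)⁻¹)) := by
          rw [← hstdtc]
          apply mul_le_mul_of_nonneg_left _ hnR.le
          apply mul_le_mul_of_nonneg_right hbtc hstd_pos.le
      _ = 1 / (Real.sqrt (2 * Real.pi) * tc) := by
          field_simp
    
end Prob

lemma WnPP_nonneg (c0 : ℝ) (n : ℕ) (F : ℝ → ℝ) (x : Fin n → ℝ) : 0 ≤ WnPP c0 n F x := by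
  unfold WnPP
  apply Real.sSup_nonneg
  rintro v ⟨t, _, rfl⟩
  positivity

lemma epsHatStar_small {n : ℕ} (hn : n ≤ 1) (a : ℝ) (x : Fin n → ℝ) :
    epsHatStar n a x = 0 := by
  unfold epsHatStar
  have hlog : Real.log n = 0 := by
    interval_cases n
    · simp
    · simp
  rw [hlog]
  norm_num

/-- Main deterministic bridge: on the good event the estimator is below `ε`. -/
lemma bridge {n : ℕ} {a ε : ℝ} {H : Measure ℝ} [IsProbabilityMeasure H]
    (hn : 2 ≤ n) (ha : 0 < a) (hε0 : 0 ≤ ε) (hε1 : ε ≤ 1) (hH : H (Set.Ioi 0) = 1)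
    (x : Fin n → ℝ)
    (hW : WnPP 3 n (oneSidedCdf ε H) x < a)
    (hE1 : empCdf n x 0 ≤ oneSidedCdf ε H 0 + Real.sqrt (3 * Real.log n / n))
    (hE2 : oneSidedCdf ε H (gridPt n (Nat.ceil (2 * Real.log n) + 1))
        ≤ Phi (Real.sqrt (2 * Real.log n)) ∨
      ∃ x₀, 0 ≤ x₀ ∧ x₀ ≤ gridPt n (Nat.ceil (2 * Real.log n) + 1) ∧
        oneSidedCdf ε H x₀ = Phi (Real.sqrt (2 * Real.log n)) ∧
        ∀ i, ¬(x₀ < x i ∧ x i ≤ gridPt n (Nat.ceil (2 * Real.log n) + 1))) :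
    epsHatStar n a x ≤ ε := by
  set F := oneSidedCdf ε H with hF
  set tc := Real.sqrt (2 * Real.log n) with htc
  set K := Nat.ceil (2 * Real.log n) with hK
  have hFn0 : empCdf n x 0 - Real.sqrt (3 * Real.log n / n) ≤ F 0 := by linarith
  -- membership in the constraint region for points of [0, tc]
  have hmem : ∀ y : ℝ, 0 ≤ y → F y ≤ Phi tc →
      envM n a (empCdf n x) y ≤ F y ∧ F y ≤ envP n a (empCdf n x) y := by
    intro y hy0 hy2
    apply env_at_point hn ha hε0 hε1 x y hW _ hy2
    calc empCdf n x 0 - Real.sqrt (3 * Real.log n / n) ≤ F 0 := hFn0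
      _ ≤ F y := osc_mono hε0 hε1 hy0
  apply core_det hε0
  intro j hj
  obtain ⟨hj1, hjK⟩ := hj
  apply core_epsHatJ hn hε0 hε1 hH
  · -- envelope upper at t_j
    have h0 : 0 ≤ gridPt n j := gridPt_nonneg hj1
    have hle : gridPt n j ≤ tc := gridPt_le' hn hjK
    exact (hmem _ h0 (le_trans (osc_le_Phi hε0 hε1 hH _) (Phi_mono hle))).2
  · -- envelope lower at t_{j+1}
    rcases lt_or_ge (j+1) (K+1) with hlt | hge
    · have h0 : 0 ≤ gridPt n (j+1) := gridPt_nonneg (by omega)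
      have hle : gridPt n (j+1) ≤ tc := gridPt_le' hn (by omega)
      exact (hmem _ h0 (le_trans (osc_le_Phi hε0 hε1 hH _) (Phi_mono hle))).1
    · -- j = K : the last pair
      have hjK' : j = K := by omega
      subst hjK'
      rcases hE2 with hcase | ⟨x₀, hx₀0, hx₀b, hFx₀, hgap⟩
      · have h0 : 0 ≤ gridPt n (K+1) := gridPt_nonneg (by omega)
        exact (hmem _ h0 hcase).1
      · have hcongr : empCdf n x (gridPt n (K+1)) = empCdf n x x₀ :=
          empCdf_congr_of_gap hx₀b hgap
        have henvM_eq : envM n a (empCdf n x) (gridPt n (K+1)) = envM n a (empCdf n x) x₀ := by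
          unfold envM
          rw [hcongr]
        rw [henvM_eq]
        calc envM n a (empCdf n x) x₀ ≤ F x₀ := (hmem x₀ hx₀0 (le_of_eq hFx₀)).1
          _ ≤ F (gridPt n (K+1)) := osc_mono hε0 hε1 hx₀b

/-- with `aₙ` an `α`-upper percentile of `Wₙ⁺⁺ = Wₙ⁺⁺(3)`, the grid
estimator is an asymptotic `1 - α` lower confidence bound for `ε`, uniformly over
all one-sided Gaussian mixtures with `P(H > 0) = 1`. -/
theorem stmt3 (α : ℝ) (hα : 0 < α) (hα1 : α < 1) (a : ℕ → ℝ)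
    (ha : ∀ n : ℕ, ∀ ε : ℝ, 0 ≤ ε → ε ≤ 1 →
      ∀ H : Measure ℝ, IsProbabilityMeasure H → H (Set.Ioi 0) = 1 →
        ∀ (Ω : Type) [MeasurableSpace Ω] (Q : Measure Ω), IsProbabilityMeasure Q →
          ∀ X : Fin n → Ω → ℝ, IIDWithCdf Q X (oneSidedCdf ε H) →
            Q {ω | a n ≤ WnPP 3 n (oneSidedCdf ε H) (fun i => X i ω)} ≤ ENNReal.ofReal α) :
    ∃ δ : ℕ → ℝ, Filter.Tendsto δ Filter.atTop (nhds 0) ∧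
      ∀ n : ℕ, ∀ ε : ℝ, 0 ≤ ε → ε ≤ 1 →
        ∀ H : Measure ℝ, IsProbabilityMeasure H → H (Set.Ioi 0) = 1 →
          ∀ (Ω : Type) [MeasurableSpace Ω] (P : Measure Ω), IsProbabilityMeasure P →
            ∀ X : Fin n → Ω → ℝ, IIDWithCdf P X (oneSidedCdf ε H) →
              ENNReal.ofReal ((1 - α) * (1 - δ n)) ≤
                P {ω | epsHatStar n (a n) (fun i => X i ω) ≤ ε} := by
  classical
  set v1 : ℕ → ℝ := fun n => 1 / (12 * Real.log n) with hv1
  set v2 : ℕ → ℝ := fun n => 1 / (Real.sqrt (2 * Real.pi) * Real.sqrt (2 * Real.log n)) with hv2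
  set δ : ℕ → ℝ := fun n => if n ≤ 1 then 0 else (v1 n + v2 n) / (1 - α) with hδ
  have hαpos : (0:ℝ) < 1 - α := by linarith
  refine ⟨δ, ?_, ?_⟩
  · -- δ → 0
    have hlog : Tendsto (fun n : ℕ => Real.log n) atTop atTop :=
      Real.tendsto_log_atTop.comp tendsto_natCast_atTop_atTop
    have h1 : Tendsto v1 atTop (nhds 0) := by
      rw [hv1]
      simp only [one_div]
      exact (hlog.const_mul_atTop (by norm_num : (0:ℝ) < 12)).inv_tendsto_atTop
    have h2 : Tendsto v2 atTop (nhds 0) := by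
      rw [hv2]
      simp only [one_div]
      apply Tendsto.inv_tendsto_atTop
      apply Tendsto.const_mul_atTop (Real.sqrt_pos.2 (by positivity : (0:ℝ) < 2 * Real.pi))
      have hsqrt : Tendsto (fun x : ℝ => Real.sqrt x) atTop atTop := by
        rw [tendsto_atTop_atTop]
        intro C
        refine ⟨(max C 0)^2, fun x hx => ?_⟩
        have h1 : Real.sqrt ((max C 0)^2) ≤ Real.sqrt x := Real.sqrt_le_sqrt hx
        rw [Real.sqrt_sq (le_max_right C 0)] at h1
        exact le_trans (le_max_left C 0) h1
      exact hsqrt.comp (hlog.const_mul_atTop (by norm_num : (0:ℝ) < 2))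
    have h3 : Tendsto (fun n => (v1 n + v2 n) / (1 - α)) atTop (nhds 0) := by
      have := (h1.add h2).div_const (1 - α)
      simpa using this
    apply h3.congr'
    filter_upwards [Filter.eventually_ge_atTop 2] with n hn
    rw [hδ]
    simp only [if_neg (by omega : ¬ n ≤ 1)]
  · intro n ε hε0 hε1 H hHprob hH Ω mΩ P hPprob X hiid
    haveI := hHprob
    haveI := hPprob
    rcases le_or_gt n 1 with hn1 | hn1
    · -- trivial small case
      have hstar : ∀ ω, epsHatStar n (a n) (fun i => X i ω) = 0 :=
        fun ω => epsHatStar_small hn1 _ _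
      have hset : {ω | epsHatStar n (a n) (fun i => X i ω) ≤ ε} = Set.univ := by
        ext ω
        simp [hstar ω, hε0]
      rw [hset, measure_univ]
      exact le_trans (ENNReal.ofReal_le_one.2 (by
        rw [hδ]
        simp only [if_pos hn1]
        nlinarith)) le_rfl
    · have hn : 2 ≤ n := hn1
      set F := oneSidedCdf ε H with hFdef
      set tc := Real.sqrt (2 * Real.log n) with htc
      set K := Nat.ceil (2 * Real.log n) with hK
      set b := gridPt n (K + 1) with hb
      have hlogn : 0 < Real.log n := Real.log_pos (by exact_mod_cast hn)
      -- a n is positive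
      have haP := ha n ε hε0 hε1 H hHprob hH Ω P hPprob X hiid
      have hapos : 0 < a n := by
        by_contra hcon
        push_neg at hcon
        have hall : {ω : Ω | a n ≤ WnPP 3 n F (fun i => X i ω)} = Set.univ := by
          ext ω
          simp only [Set.mem_setOf_eq, Set.mem_univ, iff_true]
          exact le_trans hcon (WnPP_nonneg _ _ _ _)
        rw [hall, measure_univ] at haP
        exact absurd (lt_of_le_of_lt haP (ENNReal.ofReal_lt_one.2 hα1)) (lt_irrefl _)
      -- bad events
      set A1 : Set Ω := {ω | a n ≤ WnPP 3 n F (fun i => X i ω)} with hA1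
      set A2 : Set Ω := {ω | F 0 + Real.sqrt (3 * Real.log n / n) <
        empCdf n (fun i => X i ω) 0} with hA2
      have hA2le : P A2 ≤ ENNReal.ofReal (v1 n) :=
        cheb_bound hn X F (osc_pos hε0 hε1 0).le (osc_lt_one hε0 hε1 0).le hiid
      -- third bad event, by cases on whether F b exceeds Phi tc
      obtain ⟨A3, hA3le, hA3good⟩ : ∃ A3 : Set Ω, P A3 ≤ ENNReal.ofReal (v2 n) ∧
          ∀ ω, ω ∉ A3 → (F b ≤ Phi tc ∨
            ∃ x₀, 0 ≤ x₀ ∧ x₀ ≤ b ∧ F x₀ = Phi tc ∧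
              ∀ i, ¬(x₀ < X i ω ∧ X i ω ≤ b)) := by
        by_cases hcase : F b ≤ Phi tc
        · exact ⟨∅, by simp, fun ω _ => Or.inl hcase⟩
        · push_neg at hcase
          have hb0 : (0:ℝ) ≤ b := gridPt_nonneg (by omega)
          have hF0tc : F 0 ≤ Phi tc := by
            calc F 0 ≤ Phi 0 := osc_le_Phi hε0 hε1 hH 0
              _ ≤ Phi tc := Phi_mono (Real.sqrt_nonneg _)
          have hivt := intermediate_value_Icc hb0 (((osc_continuous (H := H) hε0 hε1)).continuousOn
            (s := Set.Icc 0 b))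
          obtain ⟨x₀, hx₀mem, hx₀pre⟩ := hivt ⟨hF0tc, hcase.le⟩
          have hx₀ : F x₀ = Phi tc := hx₀pre
          refine ⟨⋃ i, {ω | x₀ < X i ω ∧ X i ω ≤ b}, ?_, ?_⟩
          · calc P (⋃ i, {ω | x₀ < X i ω ∧ X i ω ≤ b})
                ≤ ENNReal.ofReal (n * (F b - F x₀)) :=
                  gap_prob X F (osc_mono hε0 hε1) (fun t => (osc_pos hε0 hε1 t).le)
                    hiid hx₀mem.2
              _ ≤ ENNReal.ofReal (v2 n) := by
                  apply ENNReal.ofReal_le_ofReal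
                  have h1 : F b ≤ Phi b := osc_le_Phi hε0 hε1 hH b
                  have h2 : (n:ℝ) * (Phi b - Phi tc) ≤ v2 n := Phi_tail_gap hn
                  have hnR : (0:ℝ) < n := by positivity
                  have : F b - F x₀ ≤ Phi b - Phi tc := by rw [hx₀]; linarith
                  nlinarith
          · intro ω hω
            refine Or.inr ⟨x₀, hx₀mem.1, hx₀mem.2, hx₀, fun i hcontra => hω ?_⟩
            exact Set.mem_iUnion.2 ⟨i, hcontra⟩
      -- the good event is contained in the target
      set T : Set Ω := {ω | epsHatStar n (a n) (fun i => X i ω) ≤ ε} with hT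
      have hsub : (A1 ∪ A2 ∪ A3)ᶜ ⊆ T := by
        intro ω hω
        simp only [Set.mem_compl_iff, Set.mem_union, not_or] at hω
        obtain ⟨⟨h1, h2⟩, h3⟩ := hω
        have hW : WnPP 3 n F (fun i => X i ω) < a n := lt_of_not_ge h1
        have hE1 : empCdf n (fun i => X i ω) 0 ≤ F 0 + Real.sqrt (3 * Real.log n / n) :=
          le_of_not_gt h2
        exact bridge hn hapos hε0 hε1 hH _ hW hE1 (hA3good ω h3)
      -- measure arithmetic
      rcases le_or_gt ((1 - α) * (1 - δ n)) 0 with htriv | hpos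
      · rw [ENNReal.ofReal_of_nonpos htriv]
        exact zero_le
      · have hδn : δ n = (v1 n + v2 n) / (1 - α) := by
          rw [hδ]; simp only [if_neg (by omega : ¬ n ≤ 1)]
        have hval : (1 - α) * (1 - δ n) = 1 - (α + v1 n + v2 n) := by
          rw [hδn]
          field_simp
          ring
        have hv1nn : 0 ≤ v1 n := by rw [hv1]; positivity
        have hv2nn : 0 ≤ v2 n := by rw [hv2]; positivity
        set B := ENNReal.ofReal (α + v1 n + v2 n) with hB
        have hsum : ENNReal.ofReal ((1 - α) * (1 - δ n)) + B = 1 := by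
          rw [hB, ← ENNReal.ofReal_add hpos.le (by positivity), hval]
          rw [show 1 - (α + v1 n + v2 n) + (α + v1 n + v2 n) = 1 by ring]
          exact ENNReal.ofReal_one
        have hPS : P (A1 ∪ A2 ∪ A3) ≤ B := by
          calc P (A1 ∪ A2 ∪ A3) ≤ P (A1 ∪ A2) + P A3 := measure_union_le _ _
            _ ≤ (P A1 + P A2) + P A3 := add_le_add_left (measure_union_le _ _) _
            _ ≤ (ENNReal.ofReal α + ENNReal.ofReal (v1 n)) + ENNReal.ofReal (v2 n) :=
                add_le_add (add_le_add haP hA2le) hA3le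
            _ = B := by
                rw [hB, ← ENNReal.ofReal_add hα.le hv1nn, ← ENNReal.ofReal_add (by linarith) hv2nn]
        have hone : (1:ℝ≥0∞) ≤ B + P T := by
          calc (1:ℝ≥0∞) = P Set.univ := (measure_univ).symm
            _ = P ((A1 ∪ A2 ∪ A3) ∪ (A1 ∪ A2 ∪ A3)ᶜ) := by rw [Set.union_compl_self]
            _ ≤ P (A1 ∪ A2 ∪ A3) + P ((A1 ∪ A2 ∪ A3)ᶜ) := measure_union_le _ _
            _ ≤ B + P T := add_le_add hPS (measure_mono hsub)
        -- conclude
        have hfin : B ≠ ⊤ := ENNReal.ofReal_ne_top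
        calc ENNReal.ofReal ((1 - α) * (1 - δ n)) = 1 - B := by
              rw [← hsum]
              rw [ENNReal.add_sub_cancel_right hfin]
          _ ≤ P T := by
              rw [tsub_le_iff_left]
              exact hone

end
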